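/- Let R be a commutative ring, f ∈ R, and let R_f denote the localization of R at the powers of f. Let δ ∈ R_f, and assume there exists h ∈ R such that (i) δ − h/1 is nilpotent in R_f, and (ii) h lies in the radical of the ideal (f) of R. Then there exists N₀ such that for every N ≥ N₀, the power δ^N lies in the image of the localization map R → R_f. -/
import Mathlib


/-- Let `R` be a commutative ring, `f ∈ R`, `R_f` the localization away from `f`, and
`δ ∈ R_f`. If there is `h ∈ R` with `δ − h/1` nilpotent in `R_f` and `h` in the radical
of the ideal `(f)`, then all large enough powers `δ^N` lie in the image of `R → R_f`. -/
theorem pow_mem_image_of_localization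
    {R : Type*} [CommRing R] (f : R) (δ : Localization.Away f) (h : R)
    (h1 : IsNilpotent (δ - algebraMap R (Localization.Away f) h))
    (h2 : h ∈ (Ideal.span {f}).radical) :
    ∃ N₀ : ℕ, ∀ N : ℕ, N₀ ≤ N →
      ∃ r : R, algebraMap R (Localization.Away f) r = δ ^ N := by
  obtain ⟨n, hn⟩ := h1
  obtain ⟨K, hK⟩ := h2
  rw [Ideal.mem_span_singleton] at hK
  obtain ⟨c, hc⟩ := hK
  obtain ⟨⟨a, s⟩, hs⟩ := IsLocalization.surj (Submonoid.powers f)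
    (δ - algebraMap R (Localization.Away f) h)
  obtain ⟨m₁, hm₁⟩ := s.2
  simp only at hs
  have hεφ : (δ - algebraMap R (Localization.Away f) h) *
      algebraMap R (Localization.Away f) (f ^ m₁) = algebraMap R (Localization.Away f) a := by
    rw [show f ^ m₁ = (s : R) from hm₁]; exact hs
  refine ⟨n + K * (n * m₁), fun N hN => ?_⟩
  have key : (algebraMap R (Localization.Away f) h
      + (δ - algebraMap R (Localization.Away f) h)) ^ N
      ∈ (algebraMap R (Localization.Away f)).range := by
    rw [add_pow]
    refine Subring.sum_mem _ fun j hj => ?_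
    rcases le_or_gt n (N - j) with hge | hlt
    · have hz : (δ - algebraMap R (Localization.Away f) h) ^ (N - j) = 0 := by
        rw [← Nat.sub_add_cancel hge, pow_add, hn, mul_zero]
      rw [hz, mul_zero, zero_mul]
      exact Subring.zero_mem _
    · have hjN : j ≤ N := Nat.lt_succ_iff.mp (Finset.mem_range.mp hj)
      set i := N - j with hi
      have hjge : K * (i * m₁) ≤ j := by
        have h1' : K * (i * m₁) ≤ K * (n * m₁) :=
          Nat.mul_le_mul_left _ (Nat.mul_le_mul_right _ hlt.le)
        omega
      have hpow : (δ - algebraMap R (Localization.Away f) h) ^ i *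
          algebraMap R (Localization.Away f) (f ^ (i * m₁))
          = algebraMap R (Localization.Away f) (a ^ i) := by
        rw [mul_comm i m₁, pow_mul, map_pow, ← mul_pow, hεφ, map_pow]
      have hh : h ^ j = f ^ (i * m₁) * (c ^ (i * m₁) * h ^ (j - K * (i * m₁))) := by
        conv_lhs => rw [show j = K * (i * m₁) + (j - K * (i * m₁)) from by omega]
        rw [pow_add, pow_mul, hc, mul_pow]
        ring
      have hkey : (algebraMap R (Localization.Away f) h) ^ j *
          (δ - algebraMap R (Localization.Away f) h) ^ (N - j)
          = algebraMap R (Localization.Away f)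
            (a ^ i * (c ^ (i * m₁) * h ^ (j - K * (i * m₁)))) := by
        rw [← map_pow, hh, map_mul, map_mul, ← hi, map_mul, ← hpow, map_mul]
        ring
      refine ⟨a ^ i * (c ^ (i * m₁) * h ^ (j - K * (i * m₁))) * (N.choose j : R), ?_⟩
      rw [map_mul, map_natCast, hkey]
  have hδ : δ ^ N = (algebraMap R (Localization.Away f) h
      + (δ - algebraMap R (Localization.Away f) h)) ^ N := by ring
  rw [hδ]
  exact key
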